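/- Let K be a field, H a finite-dimensional K-vector space, n ≥ 0 an integer, and let F^0 ⊇ F^1 ⊇ ⋯ ⊇ F^{n+1} and G^0 ⊇ G^1 ⊇ ⋯ ⊇ G^{n+1} be decreasing chains of subspaces of H with F^0 = G^0 = H and F^{n+1} = G^{n+1} = 0, which are opposite, i.e. H = F^p ⊕ G^{n+1−p} for every 0 ≤ p ≤ n+1. Then H decomposes as the internal direct sum H = ⊕_{p+q=n} (F^p ∩ G^q), i.e. the subspaces H^{p,n−p} := F^p ∩ G^{n−p} for 0 ≤ p ≤ n are linearly independent and together span H. -/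

import Mathlib

theorem aux7 (K : Type*) [Field K] (H : Type*) [AddCommGroup H] [Module K H]
    (n : ℕ) (F G : ℕ → Submodule K H)
    (hF : Antitone F) (hG : Antitone G)
    (hF0 : F 0 = ⊤) (hFtop : F (n + 1) = ⊥)
    (hopp : ∀ p ≤ n + 1, F p ⊓ G (n + 1 - p) = ⊥ ∧ F p ⊔ G (n + 1 - p) = ⊤) :
    DirectSum.IsInternal (fun p : Fin (n + 1) => F p ⊓ G (n - p)) := by
  rw [DirectSum.isInternal_submodule_iff_iSupIndep_and_iSup_eq_top]
  constructor
  · intro p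
    have hb : (⨆ j, ⨆ (_ : j ≠ p), (F (j : ℕ) ⊓ G (n - (j : ℕ))))
        ≤ F (p + 1) ⊔ G (n - p + 1) := by
      refine iSup_le fun j => iSup_le fun hj => ?_
      rcases lt_or_gt_of_ne hj with h | h
      · have hjp : (j : ℕ) < p := h
        have hple : (p : ℕ) ≤ n := Nat.lt_succ_iff.mp p.isLt
        exact le_sup_of_le_right (inf_le_right.trans (hG (by omega)))
      · have hjp : (p : ℕ) < j := h
        exact le_sup_of_le_left (inf_le_left.trans (hF (by omega)))
    refine Disjoint.mono_right hb ?_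
    rw [Submodule.disjoint_def]
    intro x hx hx'
    have hple : (p : ℕ) ≤ n := Nat.lt_succ_iff.mp p.isLt
    obtain ⟨a, ha, b, hb', rfl⟩ := Submodule.mem_sup.mp hx'
    have hxF : a + b ∈ F (p : ℕ) := hx.1
    have hxG : a + b ∈ G (n - (p : ℕ)) := hx.2
    have hbG : b ∈ G (n - (p : ℕ)) := hG (by omega) hb'
    have haG : a ∈ G (n - (p : ℕ)) := by
      have := Submodule.sub_mem _ hxG hbG
      simpa using this
    have ha0 : a = 0 := by
      have h1 := (hopp ((p : ℕ) + 1) (by omega)).1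
      have he : n + 1 - ((p : ℕ) + 1) = n - p := by omega
      rw [he] at h1
      have hm : a ∈ F ((p : ℕ) + 1) ⊓ G (n - (p : ℕ)) := Submodule.mem_inf.mpr ⟨ha, haG⟩
      rw [h1] at hm
      simpa using hm
    subst ha0
    have hbF : b ∈ F (p : ℕ) := by simpa using hxF
    have h1 := (hopp (p : ℕ) (by omega)).1
    have he : n + 1 - (p : ℕ) = n - p + 1 := by omega
    rw [he] at h1
    have hm : b ∈ F (p : ℕ) ⊓ G (n - (p : ℕ) + 1) := Submodule.mem_inf.mpr ⟨hbF, hb'⟩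
    rw [h1] at hm
    simpa using hm
  · -- spanning
    set S := ⨆ p : Fin (n + 1), (F (p : ℕ) ⊓ G (n - (p : ℕ))) with hS
    have step : ∀ m ≤ n, F m ≤ F (m + 1) ⊔ (F m ⊓ G (n - m)) := by
      intro m hm x hx
      have h2 := (hopp (m + 1) (by omega)).2
      have he : n + 1 - (m + 1) = n - m := by omega
      rw [he] at h2
      have hxs : x ∈ F (m + 1) ⊔ G (n - m) := by rw [h2]; trivial
      obtain ⟨a, ha, b, hb', rfl⟩ := Submodule.mem_sup.mp hxs
      have hbF : b ∈ F m := by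
        have : a + b - a ∈ F m := Submodule.sub_mem _ hx (hF (by omega) ha)
        simpa using this
      exact Submodule.add_mem_sup ha (Submodule.mem_inf.mpr ⟨hbF, hb'⟩)
    have claim : ∀ k ≤ n + 1, F (n + 1 - k) ≤ S := by
      intro k
      induction k with
      | zero => intro _; simp [hFtop]
      | succ k ih =>
        intro hk
        have hm : n + 1 - (k + 1) = n - k := by omega
        rw [hm]
        have h1 : F (n - k) ≤ F (n - k + 1) ⊔ (F (n - k) ⊓ G (n - (n - k))) :=
          step (n - k) (by omega)
        have h2 : F (n - k + 1) ≤ S := by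
          have he : n - k + 1 = n + 1 - k := by omega
          rw [he]; exact ih (by omega)
        have h3 : F (n - k) ⊓ G (n - (n - k)) ≤ S :=
          le_iSup (fun p : Fin (n + 1) => F (p : ℕ) ⊓ G (n - (p : ℕ)))
            (⟨n - k, by omega⟩ : Fin (n + 1))
        exact h1.trans (sup_le h2 h3)
    rw [eq_top_iff, ← hF0]
    have := claim (n + 1) le_rfl
    simpa using this

/-- Let `K` be a field, `H` a finite-dimensional `K`-vector space, `n ≥ 0`,
and let `F^0 ⊇ ⋯ ⊇ F^{n+1}` and `G^0 ⊇ ⋯ ⊇ G^{n+1}` be decreasing chains of subspaces of `H`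
with `F^0 = G^0 = H`, `F^{n+1} = G^{n+1} = 0`, which are opposite, i.e.
`H = F^p ⊕ G^{n+1-p}` for every `0 ≤ p ≤ n+1`.  Then `H = ⊕_{p+q=n} (F^p ∩ G^q)`:
the subspaces `H^{p,n-p} = F^p ∩ G^{n-p}`, `0 ≤ p ≤ n`, are independent and span `H`. -/
theorem stmt7 (K : Type*) [Field K] (H : Type*) [AddCommGroup H] [Module K H]
    [FiniteDimensional K H] (n : ℕ)
    (F G : Fin (n + 2) → Submodule K H)
    (hFmono : ∀ i j : Fin (n + 2), i ≤ j → F j ≤ F i)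
    (hGmono : ∀ i j : Fin (n + 2), i ≤ j → G j ≤ G i)
    (hF0 : F 0 = ⊤) (hG0 : G 0 = ⊤)
    (hFtop : F (Fin.last (n + 1)) = ⊥) (hGtop : G (Fin.last (n + 1)) = ⊥)
    (hopp : ∀ p : Fin (n + 2), F p ⊓ G (Fin.rev p) = ⊥ ∧ F p ⊔ G (Fin.rev p) = ⊤) :
    DirectSum.IsInternal (fun p : Fin (n + 1) =>
      F (Fin.castSucc p) ⊓ G ((Fin.last n - p).castSucc)) := by
  have fe : ∀ a b : Fin (n + 2), (a : ℕ) = (b : ℕ) → F a = F b :=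
    fun a b h => congrArg F (Fin.ext h)
  have ge : ∀ a b : Fin (n + 2), (a : ℕ) = (b : ℕ) → G a = G b :=
    fun a b h => congrArg G (Fin.ext h)
  set F' : ℕ → Submodule K H := fun i => F ⟨min i (n + 1), by omega⟩ with hF'
  set G' : ℕ → Submodule K H := fun i => G ⟨min i (n + 1), by omega⟩ with hG'
  have hFa : Antitone F' := fun i j hij =>
    hFmono _ _ (by simp only [Fin.mk_le_mk]; omega)
  have hGa : Antitone G' := fun i j hij =>
    hGmono _ _ (by simp only [Fin.mk_le_mk]; omega)
  have hF'0 : F' 0 = ⊤ :=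
    (fe _ 0 (by simp)).trans hF0
  have hF'top : F' (n + 1) = ⊥ :=
    (fe _ (Fin.last (n + 1)) (by simp)).trans hFtop
  have hopp' : ∀ p ≤ n + 1, F' p ⊓ G' (n + 1 - p) = ⊥ ∧ F' p ⊔ G' (n + 1 - p) = ⊤ := by
    intro p hp
    obtain ⟨h1, h2⟩ := hopp ⟨p, by omega⟩
    have ef : F' p = F ⟨p, by omega⟩ :=
      fe _ _ (show min p (n + 1) = p by omega)
    have eg : G' (n + 1 - p) = G (Fin.rev ⟨p, by omega⟩) :=
      ge _ _ (by rw [Fin.val_rev]; show min (n + 1 - p) (n + 1) = (n + 2) - (p + 1); omega)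
    rw [ef, eg]
    exact ⟨h1, h2⟩
  have key := aux7 K H n F' G' hFa hGa hF'0 hF'top hopp'
  have heq : (fun p : Fin (n + 1) => F' (p : ℕ) ⊓ G' (n - (p : ℕ)))
      = (fun p : Fin (n + 1) =>
          F (Fin.castSucc p) ⊓ G ((Fin.last n - p).castSucc)) := by
    funext p
    have hple : (p : ℕ) ≤ n := Nat.lt_succ_iff.mp p.isLt
    have hsub : ((Fin.last n - p : Fin (n + 1)) : ℕ) = n - (p : ℕ) := by
      rw [Fin.coe_sub_iff_le.mpr (Fin.le_last p), Fin.val_last]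
    have ef : F' (p : ℕ) = F (Fin.castSucc p) :=
      fe _ _ (by rw [Fin.coe_castSucc]; show min (p : ℕ) (n + 1) = (p : ℕ); omega)
    have eg : G' (n - (p : ℕ)) = G ((Fin.last n - p).castSucc) :=
      ge _ _ (by rw [Fin.coe_castSucc, hsub]; show min (n - (p : ℕ)) (n + 1) = n - (p : ℕ); omega)
    rw [ef, eg]
  rwa [heq] at key
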